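/- Let $G$ be a graph on vertices $\{v_1,\ldots,v_n\}$ where $v_{n-1}=v$ and $v_n=v'$ are false twins, let $G^* = G - v'$, and let $M^* \in S(G^*)$ satisfy $m^*_{vv} = 0$. Define the symmetric matrix $M$ by $m_{uw} = m^*_{uw}$ for $u,w \notin \{v,v'\}$, $m_{uv} = m_{uv'} = m^*_{uv}/\sqrt{2}$ for $u \notin \{v,v'\}$, and $m_{vv} = m_{v'v'} = m_{vv'} = 0$. Then $M \in S(G)$ and the set of eigenvalues of $M$ equals the set of eigenvalues of $M^*$ together with $0$. -/

import Mathlib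

lemma spectrum_fromBlocks_diag {m p : Type*} [Fintype m] [Fintype p]
    [DecidableEq m] [DecidableEq p] (A : Matrix m m ℝ) (B : Matrix p p ℝ) :
    spectrum ℝ (Matrix.fromBlocks A 0 0 B) = spectrum ℝ A ∪ spectrum ℝ B := by
  ext μ
  have key : algebraMap ℝ (Matrix (m ⊕ p) (m ⊕ p) ℝ) μ - Matrix.fromBlocks A 0 0 B
      = Matrix.fromBlocks (algebraMap ℝ (Matrix m m ℝ) μ - A) 0 0
        (algebraMap ℝ (Matrix p p ℝ) μ - B) := by
    ext (i | i) (j | j) <;>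
      simp [Matrix.algebraMap_eq_diagonal, Matrix.diagonal_apply, Matrix.sub_apply]
  simp only [Set.mem_union, spectrum.mem_iff, key, Matrix.isUnit_iff_isUnit_det,
    Matrix.det_fromBlocks_zero₂₁, IsUnit.mul_iff]
  tauto

def twinπ (n : ℕ) : Fin (n + 1) ⊕ Fin 1 → Fin (n + 1) := Sum.elim id fun _ => Fin.last n

def twinw (n : ℕ) (c : ℝ) : Fin (n + 1) ⊕ Fin 1 → ℝ :=
  Sum.elim (fun i => if i = Fin.last n then c else 1) fun _ => c

def twing (n : ℕ) (c : ℝ) : Fin (n + 1) ⊕ Fin 1 → ℝ :=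
  Sum.elim (fun i => if i = Fin.last n then c else 0) fun _ => -c

def twinP (n : ℕ) (c : ℝ) : Matrix (Fin (n + 1) ⊕ Fin 1) (Fin (n + 1) ⊕ Fin 1) ℝ :=
  Matrix.of fun a b =>
    Sum.elim (fun k => if k = twinπ n a then twinw n c a else 0) (fun _ => twing n c a) b

lemma twinP_apply_inl (n : ℕ) (c : ℝ) (a : Fin (n + 1) ⊕ Fin 1) (k : Fin (n + 1)) :
    twinP n c a (Sum.inl k) = if k = twinπ n a then twinw n c a else 0 := rfl

lemma twinP_apply_inr (n : ℕ) (c : ℝ) (a : Fin (n + 1) ⊕ Fin 1) (j : Fin 1) :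
    twinP n c a (Sum.inr j) = twing n c a := rfl

lemma twinP_symmetric (n : ℕ) (c : ℝ) (a b : Fin (n + 1) ⊕ Fin 1) :
    twinP n c b a = twinP n c a b := by
  rcases a with i | i <;> rcases b with j | j <;>
    simp only [twinP, twinπ, twinw, twing, Matrix.of_apply, Sum.elim_inl, Sum.elim_inr, id]
  by_cases h : i = j
  · subst h; rfl
  · simp [h, Ne.symm h]
  all_goals (split_ifs <;> simp_all)

lemma sum_ite_collapse {m : Type*} [Fintype m] [DecidableEq m] (s : m) (x : ℝ) (f : m → ℝ) :
    (∑ k, (if k = s then x else 0) * f k) = x * f s := by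
  rw [Finset.sum_eq_single s]
  · simp
  · intro k _ hk; simp [hk]
  · simp

lemma twinP_mul_twinP (n : ℕ) (c : ℝ) (hc2 : c * c = 1 / 2) :
    twinP n c * twinP n c = 1 := by
  ext a b
  rw [Matrix.mul_apply, Fintype.sum_sum_type]
  have ha : ∀ k : Fin (n + 1), twinP n c a (Sum.inl k) * twinP n c (Sum.inl k) b
      = (if k = twinπ n a then twinw n c a else 0) * (if k = twinπ n b then twinw n c b else 0) := by
    intro k
    rw [twinP_symmetric n c b (Sum.inl k), twinP_apply_inl, twinP_apply_inl]
  have hb : ∀ j : Fin 1, twinP n c a (Sum.inr j) * twinP n c (Sum.inr j) b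
      = twing n c a * twing n c b := by
    intro j
    rw [twinP_symmetric n c b (Sum.inr j), twinP_apply_inr, twinP_apply_inr]
  simp only [ha, hb, Finset.sum_const, Finset.card_univ, Fintype.card_fin, one_smul]
  rw [sum_ite_collapse (twinπ n a) (twinw n c a)
    (fun k => if k = twinπ n b then twinw n c b else 0)]
  rcases a with i | i <;> rcases b with j | j <;>
    simp only [twinπ, twinw, twing, Sum.elim_inl, Sum.elim_inr, id, Matrix.one_apply,
      Sum.inl.injEq, Sum.inr.injEq, reduceCtorEq, if_false]
  · by_cases hij : i = j
    · subst hij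
      by_cases hi : i = Fin.last n <;> simp [hi] <;> linarith
    · by_cases hi : i = Fin.last n <;> by_cases hj : j = Fin.last n
      · exact absurd (hi.trans hj.symm) hij
      · subst hi; simp [hij, hj]
      · subst hj; simp [hij, hi, Ne.symm hij]
      · simp [hij, hi, hj]
  · by_cases hi : i = Fin.last n <;> simp [hi] <;> ring
  · by_cases hj : j = Fin.last n
    · subst hj; simp <;> ring
    · simp [hj, Ne.symm hj]
  · have : i = j := Subsingleton.elim i j
    subst this
    simp
    linarith

lemma twinP_conj (n : ℕ) (c : ℝ) (Mstar : Matrix (Fin (n + 1)) (Fin (n + 1)) ℝ) :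
    twinP n c * Matrix.fromBlocks Mstar 0 0 (0 : Matrix (Fin 1) (Fin 1) ℝ) * twinP n c =
      Matrix.of fun a b => twinw n c a * (Mstar (twinπ n a) (twinπ n b) * twinw n c b) := by
  have hDP : ∀ (x : Fin (n + 1) ⊕ Fin 1) (b : Fin (n + 1) ⊕ Fin 1),
      (Matrix.fromBlocks Mstar 0 0 (0 : Matrix (Fin 1) (Fin 1) ℝ) * twinP n c) x b
        = Sum.elim (fun k => Mstar k (twinπ n b) * twinw n c b) (fun _ => (0 : ℝ)) x := by
    intro x b
    rw [Matrix.mul_apply, Fintype.sum_sum_type]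
    have hb : ∀ k : Fin (n + 1), twinP n c (Sum.inl k) b
        = if k = twinπ n b then twinw n c b else 0 := by
      intro k; rw [twinP_symmetric n c b (Sum.inl k), twinP_apply_inl]
    rcases x with k | j
    · simp only [Matrix.fromBlocks_apply₁₁, Matrix.fromBlocks_apply₁₂, Matrix.zero_apply,
        zero_mul, Finset.sum_const_zero, add_zero, hb, Sum.elim_inl, mul_ite, mul_zero]
      rw [Finset.sum_ite_eq' Finset.univ (twinπ n b)]
      simp
    · simp [Matrix.fromBlocks_apply₂₁, Matrix.fromBlocks_apply₂₂]
  ext a b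
  rw [Matrix.mul_assoc, Matrix.mul_apply, Fintype.sum_sum_type]
  simp only [hDP, Sum.elim_inl, Sum.elim_inr, mul_zero, Finset.sum_const_zero, add_zero,
    twinP_apply_inl, Matrix.of_apply]
  rw [sum_ite_collapse (twinπ n a) (twinw n c a) (fun k => Mstar k (twinπ n b) * twinw n c b)]

theorem false_twin_duplication_diag_zero (n : ℕ) (G : SimpleGraph (Fin (n + 2)))
    (v v' : Fin (n + 2)) (hv : v = (Fin.last n).castSucc) (hv' : v' = Fin.last (n + 1))
    (htwin : ¬ G.Adj v v' ∧ ∀ w, G.Adj v w ↔ G.Adj v' w)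
    (Mstar : Matrix (Fin (n + 1)) (Fin (n + 1)) ℝ) (hMstarSymm : Mstar.IsSymm)
    (hMstarS : ∀ i j : Fin (n + 1), i ≠ j →
      (Mstar i j ≠ 0 ↔ G.Adj i.castSucc j.castSucc))
    (hdiag : Mstar (Fin.last n) (Fin.last n) = 0)
    (M : Matrix (Fin (n + 2)) (Fin (n + 2)) ℝ) (hMsymm : M.IsSymm)
    (h1 : ∀ u w : Fin n, M u.castSucc.castSucc w.castSucc.castSucc
      = Mstar u.castSucc w.castSucc)
    (h2 : ∀ u : Fin n, M u.castSucc.castSucc v = Mstar u.castSucc (Fin.last n) / Real.sqrt 2)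
    (h3 : ∀ u : Fin n, M u.castSucc.castSucc v' = Mstar u.castSucc (Fin.last n) / Real.sqrt 2)
    (h4 : M v v = 0) (h5 : M v' v' = 0) (h6 : M v v' = 0) :
    (∀ i j, i ≠ j → (M i j ≠ 0 ↔ G.Adj i j)) ∧
      spectrum ℝ M = spectrum ℝ Mstar ∪ {0} := by
  have hs2 : Real.sqrt 2 ≠ 0 := by positivity
  set c : ℝ := (Real.sqrt 2)⁻¹ with hc
  have hc2 : c * c = 1 / 2 := by
    rw [hc, ← mul_inv, Real.mul_self_sqrt (by norm_num)]
    norm_num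
  have hMsym : ∀ x y, M x y = M y x := fun x y => hMsymm.apply y x
  have hSsym : ∀ x y, Mstar x y = Mstar y x := fun x y => hMstarSymm.apply y x
  have hcsl : ∀ u : Fin n, u.castSucc ≠ Fin.last n := fun u => (Fin.castSucc_lt_last u).ne
  -- adjacency to v iff to v'
  have hadj' : ∀ x, G.Adj x v ↔ G.Adj x v' := fun x => by
    rw [G.adj_comm x v, G.adj_comm x v']; exact htwin.2 x
  -- key entry fact
  have e2 : ∀ u : Fin n, (M u.castSucc.castSucc v ≠ 0 ↔ G.Adj u.castSucc.castSucc v) := by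
    intro u
    rw [h2, div_ne_zero_iff]
    have := hMstarS u.castSucc (Fin.last n) (hcsl u)
    rw [← hv] at this
    simp [hs2, this]
  have e3 : ∀ u : Fin n, (M u.castSucc.castSucc v' ≠ 0 ↔ G.Adj u.castSucc.castSucc v') := by
    intro u
    rw [h3, div_ne_zero_iff]
    have := hMstarS u.castSucc (Fin.last n) (hcsl u)
    rw [← hv] at this
    simp only [hs2, ne_eq, not_false_eq_true, and_true, this]
    exact hadj' _
  constructor
  · intro i j hij
    induction i using Fin.lastCases with
    | last =>
      rw [← hv']
      induction j using Fin.lastCases with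
      | last => exact absurd (hv' ▸ rfl) hij
      | cast k =>
        induction k using Fin.lastCases with
        | last =>
          rw [← hv]
          rw [hMsym v' v, h6]
          exact iff_of_false (fun h => h rfl) (fun h => htwin.1 h.symm)
        | cast u =>
          rw [hMsym v' _, e3 u, G.adj_comm, G.adj_comm v' _]
    | cast k =>
      induction k using Fin.lastCases with
      | last =>
        rw [← hv]
        induction j using Fin.lastCases with
        | last =>
          rw [← hv', h6]
          exact iff_of_false (fun h => h rfl) htwin.1
        | cast k =>
          induction k using Fin.lastCases with
          | last => rw [← hv] at hij ⊢; exact absurd rfl hij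
          | cast u =>
            rw [hMsym v _, e2 u, G.adj_comm, G.adj_comm v _]
      | cast u =>
        induction j using Fin.lastCases with
        | last => rw [← hv']; exact e3 u
        | cast k =>
          induction k using Fin.lastCases with
          | last => rw [← hv]; exact e2 u
          | cast u' =>
            rw [h1]
            have huu : u.castSucc ≠ u'.castSucc := by
              intro h
              exact hij (by rw [h])
            exact hMstarS u.castSucc u'.castSucc huu
  · -- spectrum
    have hPP := twinP_mul_twinP n c hc2
    have hinr : ∀ j : Fin 1, finSumFinEquiv (Sum.inr j : Fin (n + 1) ⊕ Fin 1) = v' := by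
      intro j
      rw [hv', finSumFinEquiv_apply_right]
      ext
      simp [Fin.natAdd, Fin.last, Fin.val_eq_zero j]
    have hinl : ∀ i : Fin (n + 1),
        finSumFinEquiv (Sum.inl i : Fin (n + 1) ⊕ Fin 1) = i.castSucc := by
      intro i
      rw [finSumFinEquiv_apply_left]
      rfl
    have hconj : (Matrix.reindexAlgEquiv ℝ ℝ (finSumFinEquiv (m := n + 1) (n := 1)).symm) M
        = twinP n c * Matrix.fromBlocks Mstar 0 0 (0 : Matrix (Fin 1) (Fin 1) ℝ) *
            twinP n c := by
      rw [twinP_conj]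
      ext a b
      rw [Matrix.reindexAlgEquiv_apply, Matrix.reindex_apply, Matrix.submatrix_apply,
        Equiv.symm_symm, Matrix.of_apply]
      rcases a with i | ja
      · rcases b with j | jb
        · rw [hinl, hinl]
          by_cases hi : i = Fin.last n <;> by_cases hj : j = Fin.last n
          · subst hi; subst hj
            rw [← hv, h4]
            simp [twinπ, twinw, hdiag]
          · subst hi
            obtain ⟨u, rfl⟩ := Fin.exists_castSucc_eq.mpr hj
            rw [← hv, hMsym, h2, hSsym]
            simp [twinπ, twinw, hcsl u, div_eq_mul_inv, mul_comm, hc]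
          · subst hj
            obtain ⟨u, rfl⟩ := Fin.exists_castSucc_eq.mpr hi
            rw [← hv, h2]
            simp [twinπ, twinw, hcsl u, div_eq_mul_inv, hc]
          · obtain ⟨u, rfl⟩ := Fin.exists_castSucc_eq.mpr hi
            obtain ⟨u', rfl⟩ := Fin.exists_castSucc_eq.mpr hj
            rw [h1]
            simp [twinπ, twinw, hcsl u, hcsl u']
        · rw [hinl, hinr]
          by_cases hi : i = Fin.last n
          · subst hi
            rw [← hv, h6]
            simp [twinπ, twinw, hdiag]
          · obtain ⟨u, rfl⟩ := Fin.exists_castSucc_eq.mpr hi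
            rw [h3]
            simp [twinπ, twinw, hcsl u, div_eq_mul_inv, hc]
      · rcases b with j | jb
        · rw [hinr, hinl]
          by_cases hj : j = Fin.last n
          · subst hj
            rw [← hv, hMsym, h6]
            simp [twinπ, twinw, hdiag]
          · obtain ⟨u, rfl⟩ := Fin.exists_castSucc_eq.mpr hj
            rw [hMsym, h3, hSsym]
            simp [twinπ, twinw, hcsl u, div_eq_mul_inv, mul_comm, hc]
        · rw [hinr, hinr, h5]
          simp [twinπ, twinw, hdiag]
    have hre : spectrum ℝ ((Matrix.reindexAlgEquiv ℝ ℝ (finSumFinEquiv (m := n + 1) (n := 1)).symm) M)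
        = spectrum ℝ M := AlgEquiv.spectrum_eq _ _
    let u : (Matrix (Fin (n + 1) ⊕ Fin 1) (Fin (n + 1) ⊕ Fin 1) ℝ)ˣ :=
      ⟨twinP n c, twinP n c, hPP, hPP⟩
    have hcu : spectrum ℝ ((u : Matrix (Fin (n + 1) ⊕ Fin 1) (Fin (n + 1) ⊕ Fin 1) ℝ) *
          Matrix.fromBlocks Mstar 0 0 (0 : Matrix (Fin 1) (Fin 1) ℝ) * ((u⁻¹ : _ˣ) : _))
        = spectrum ℝ (Matrix.fromBlocks Mstar 0 0 (0 : Matrix (Fin 1) (Fin 1) ℝ)) :=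
      spectrum.units_conjugate
    rw [← hre, hconj]
    have hcu' : spectrum ℝ (twinP n c * Matrix.fromBlocks Mstar 0 0
          (0 : Matrix (Fin 1) (Fin 1) ℝ) * twinP n c)
        = spectrum ℝ (Matrix.fromBlocks Mstar 0 0 (0 : Matrix (Fin 1) (Fin 1) ℝ)) := hcu
    rw [hcu', spectrum_fromBlocks_diag, spectrum.zero_eq]
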